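/- In ℝ⁴ with |V(x)| ≲ ⟨x⟩^{−4−ε}, let S₁ be the projection onto ker(U + vG₀v) and S₂ the projection onto ker(S₁PS₁) in S₁L². Then rank S₁ ≤ rank S₂ + 1. -/

import Mathlib

open MeasureTheory Real

noncomputable section

/-- The operator `G₀ = (−Δ)⁻¹` on `ℝ⁴`, with integral kernel `−(4π²)⁻¹|x−y|^{−2}`. -/
def G0 (h : EuclideanSpace ℝ (Fin 4) → ℝ) (x : EuclideanSpace ℝ (Fin 4)) : ℝ :=
  -(4 * π ^ 2)⁻¹ * ∫ y : EuclideanSpace ℝ (Fin 4), h y / ‖x - y‖ ^ 2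

namespace Stmt15Aux

open Set

local notation "E4" => EuclideanSpace ℝ (Fin 4)

/-- The Riesz kernel `‖z‖⁻²` is integrable on the unit ball of `ℝ⁴`. -/
lemma ballInt : IntegrableOn (fun z : E4 => (‖z‖ ^ 2)⁻¹) (Metric.ball 0 1) volume := by
  constructor
  · exact ((measurable_norm.pow_const 2).inv).aestronglyMeasurable
  · have hnn : 0 ≤ᵐ[volume.restrict (Metric.ball (0 : E4) 1)] fun z : E4 => (‖z‖ ^ 2)⁻¹ :=
      ae_of_all _ fun z => by positivity
    rw [hasFiniteIntegral_iff_ofReal hnn]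
    have hm : AEMeasurable (fun z : E4 => (‖z‖ ^ 2)⁻¹)
        (volume.restrict (Metric.ball (0 : E4) 1)) :=
      ((measurable_norm.pow_const 2).inv).aemeasurable
    rw [lintegral_eq_lintegral_meas_lt _ hnn hm]
    set B := volume (Metric.ball (0 : E4) 1) with hBdef
    have hB : B < ⊤ := measure_ball_lt_top
    have hsplit : Ioi (0 : ℝ) = Ioc 0 1 ∪ Ioi 1 := (Ioc_union_Ioi_eq_Ioi zero_le_one).symm
    rw [hsplit, lintegral_union measurableSet_Ioi Ioc_disjoint_Ioi_same]
    have hres : ∀ t : ℝ, (volume.restrict (Metric.ball (0 : E4) 1))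
        {z : E4 | t < (‖z‖ ^ 2)⁻¹} ≤ B := by
      intro t
      rw [Measure.restrict_apply' measurableSet_ball]
      exact measure_mono inter_subset_right
    have h1 : (∫⁻ t in Ioc (0:ℝ) 1,
        (volume.restrict (Metric.ball (0 : E4) 1)) {z : E4 | t < (‖z‖ ^ 2)⁻¹}) < ⊤ := by
      calc (∫⁻ t in Ioc (0:ℝ) 1,
          (volume.restrict (Metric.ball (0 : E4) 1)) {z : E4 | t < (‖z‖ ^ 2)⁻¹})
          ≤ ∫⁻ _ in Ioc (0:ℝ) 1, B := setLIntegral_mono measurable_const fun t _ => hres t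
        _ = B * volume (Ioc (0:ℝ) 1) := setLIntegral_const _ _
        _ < ⊤ := by
            rw [Real.volume_Ioc]
            exact ENNReal.mul_lt_top hB (by norm_num)
    have h2 : (∫⁻ t in Ioi (1:ℝ),
        (volume.restrict (Metric.ball (0 : E4) 1)) {z : E4 | t < (‖z‖ ^ 2)⁻¹}) < ⊤ := by
      have hbound : ∀ t ∈ Ioi (1:ℝ),
          (volume.restrict (Metric.ball (0 : E4) 1)) {z : E4 | t < (‖z‖ ^ 2)⁻¹}
            ≤ ENNReal.ofReal ((t⁻¹) ^ 2) * B := by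
        intro t ht
        have ht0 : (0:ℝ) < t := lt_trans zero_lt_one ht
        have hsub : {z : E4 | t < (‖z‖ ^ 2)⁻¹} ⊆ Metric.closedBall 0 (Real.sqrt t⁻¹) := by
          intro z hz
          simp only [mem_setOf_eq] at hz
          have hz0 : (0:ℝ) < ‖z‖ ^ 2 := by
            rcases eq_or_lt_of_le (sq_nonneg ‖z‖) with h | h
            · exfalso; rw [← h] at hz; simp at hz; linarith
            · exact h
          have h1 : ‖z‖ ^ 2 < t⁻¹ := by
            have := (inv_lt_inv₀ (inv_pos.mpr hz0) ht0).mpr hz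
            rwa [inv_inv] at this
          have : ‖z‖ ≤ Real.sqrt t⁻¹ := by
            rw [show ‖z‖ = Real.sqrt (‖z‖ ^ 2) by rw [Real.sqrt_sq (norm_nonneg z)]]
            exact Real.sqrt_le_sqrt h1.le
          simpa [Metric.mem_closedBall, dist_eq_norm] using this
        have hmeas : (volume.restrict (Metric.ball (0 : E4) 1)) {z : E4 | t < (‖z‖ ^ 2)⁻¹}
            ≤ volume (Metric.closedBall (0 : E4) (Real.sqrt t⁻¹)) := by
          rw [Measure.restrict_apply' measurableSet_ball]
          exact measure_mono (inter_subset_left.trans hsub)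
        have hcb : volume (Metric.closedBall (0 : E4) (Real.sqrt t⁻¹))
            = ENNReal.ofReal ((t⁻¹) ^ 2) * B := by
          rw [Measure.addHaar_closedBall _ _ (Real.sqrt_nonneg _)]
          congr 2
          rw [finrank_euclideanSpace_fin]
          have : Real.sqrt t⁻¹ ^ 4 = (Real.sqrt t⁻¹ ^ 2) ^ 2 := by ring
          rw [this, Real.sq_sqrt (inv_nonneg.mpr ht0.le)]
        exact hmeas.trans hcb.le
      calc (∫⁻ t in Ioi (1:ℝ),
          (volume.restrict (Metric.ball (0 : E4) 1)) {z : E4 | t < (‖z‖ ^ 2)⁻¹})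
          ≤ ∫⁻ t in Ioi (1:ℝ), ENNReal.ofReal ((t⁻¹) ^ 2) * B :=
            setLIntegral_mono
              ((ENNReal.measurable_ofReal.comp ((measurable_id.inv).pow_const 2)).mul_const B)
              hbound
        _ = (∫⁻ t in Ioi (1:ℝ), ENNReal.ofReal ((t⁻¹) ^ 2)) * B :=
            lintegral_mul_const B
              (ENNReal.measurable_ofReal.comp ((measurable_id.inv).pow_const 2))
        _ < ⊤ := by
            apply ENNReal.mul_lt_top _ hB
            have hint : IntegrableOn (fun t : ℝ => (t⁻¹) ^ 2) (Ioi 1) volume := by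
              refine (integrableOn_Ioi_rpow_of_lt (a := -2) (by norm_num) one_pos).congr_fun
                (fun t ht => ?_) measurableSet_Ioi
              have ht0 : (0:ℝ) < t := lt_trans zero_lt_one ht
              beta_reduce
              rw [show (-2 : ℝ) = -(2:ℕ) by norm_num, Real.rpow_neg ht0.le,
                Real.rpow_natCast, ← inv_pow]
            exact hint.setLIntegral_lt_top
    exact ENNReal.add_lt_top.mpr ⟨h1, h2⟩

end Stmt15Aux

set_option maxHeartbeats 1000000

/-- `rank S₁ ≤ rank S₂ + 1`: in `ℝ⁴` with `|V| ≲ ⟨x⟩^{−4−ε}`, the dimension of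
`ker T ⊆ L²` (`T = U + vG₀v`, defining `S₁`) exceeds by at most one the dimension of
`ker T ∩ ker P` (`P` the projection onto `v`, defining `S₂`). -/
theorem stmt_15 (C ε : ℝ) (hε : 0 < ε)
    (V : EuclideanSpace ℝ (Fin 4) → ℝ) (hVm : Measurable V)
    (hV : ∀ x, |V x| ≤ C * (1 + ‖x‖ ^ 2) ^ (-(4 + ε) / 2))
    (v U : EuclideanSpace ℝ (Fin 4) → ℝ)
    (hv : ∀ x, v x = Real.sqrt |V x|)
    (hU : ∀ x, U x = if 0 ≤ V x then 1 else -1) :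
    letI K₁ : Set (Lp ℝ 2 (volume : Measure (EuclideanSpace ℝ (Fin 4)))) :=
      {f | ∀ᵐ x ∂volume, U x * f x + v x * G0 (fun y => v y * f y) x = 0}
    letI K₂ : Set (Lp ℝ 2 (volume : Measure (EuclideanSpace ℝ (Fin 4)))) :=
      {f | (∀ᵐ x ∂volume, U x * f x + v x * G0 (fun y => v y * f y) x = 0) ∧
        (∫ y, v y * f y) = 0}
    Module.rank ℝ ↥(Submodule.span ℝ K₁) ≤ Module.rank ℝ ↥(Submodule.span ℝ K₂) + 1 := by
  classical
  set K₁ : Set (Lp ℝ 2 (volume : Measure (EuclideanSpace ℝ (Fin 4)))) :=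
    {f | ∀ᵐ x ∂volume, U x * f x + v x * G0 (fun y => v y * f y) x = 0} with hK₁def
  set K₂ : Set (Lp ℝ 2 (volume : Measure (EuclideanSpace ℝ (Fin 4)))) :=
    {f | (∀ᵐ x ∂volume, U x * f x + v x * G0 (fun y => v y * f y) x = 0) ∧
      (∫ y, v y * f y) = 0} with hK₂def
  -- measurability of v
  have hvmeas : Measurable v := by
    have : Measurable fun x => Real.sqrt |V x| := hVm.abs.sqrt
    convert this using 1
    exact funext hv
  -- v ∈ L²
  have hVint : Integrable V volume := by
    have hmaj : Integrable (fun x : EuclideanSpace ℝ (Fin 4) =>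
        C * (1 + ‖x‖ ^ 2) ^ (-(4 + ε) / 2)) volume := by
      have h4 : ((Module.finrank ℝ (EuclideanSpace ℝ (Fin 4)) : ℝ)) < 4 + ε := by
        rw [finrank_euclideanSpace_fin]; push_cast; linarith
      exact (integrable_rpow_neg_one_add_norm_sq h4).const_mul C
    refine hmaj.mono' hVm.aestronglyMeasurable (ae_of_all _ fun x => ?_)
    simpa [Real.norm_eq_abs] using hV x
  have hv2 : MemLp v 2 (volume : Measure (EuclideanSpace ℝ (Fin 4))) := by
    rw [memLp_two_iff_integrable_sq hvmeas.aestronglyMeasurable]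
    have : (fun x => v x ^ 2) = fun x => |V x| := by
      funext x; rw [hv x, Real.sq_sqrt (abs_nonneg _)]
    rw [this]
    exact hVint.abs
  -- the pairing with v is well defined on L²
  have hpair : ∀ f : Lp ℝ 2 (volume : Measure (EuclideanSpace ℝ (Fin 4))),
      Integrable (fun y => v y * f y) volume := by
    intro f
    have h1 : MemLp (v • ⇑f) 1 volume :=
      (Lp.memLp f).smul hv2
    have := memLp_one_iff_integrable.mp h1
    exact this
  -- a.e. integrability of the kernel integrand
  have hker : ∀ f : Lp ℝ 2 (volume : Measure (EuclideanSpace ℝ (Fin 4))),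
      ∀ᵐ x : EuclideanSpace ℝ (Fin 4) ∂volume,
        Integrable (fun y => v y * f y / ‖x - y‖ ^ 2) volume := by
    intro f
    set h : EuclideanSpace ℝ (Fin 4) → ℝ := fun y => v y * f y with hh
    have hhint : Integrable h volume := hpair f
    set k1 : EuclideanSpace ℝ (Fin 4) → ℝ :=
      (Metric.ball (0 : EuclideanSpace ℝ (Fin 4)) 1).indicator (fun z => (‖z‖ ^ 2)⁻¹) with hk1
    set k2 : EuclideanSpace ℝ (Fin 4) → ℝ :=
      (Metric.ball (0 : EuclideanSpace ℝ (Fin 4)) 1)ᶜ.indicator (fun z => (‖z‖ ^ 2)⁻¹) with hk2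
    have hk1meas : Measurable k1 :=
      ((measurable_norm.pow_const 2).inv).indicator measurableSet_ball
    have hk2meas : Measurable k2 :=
      ((measurable_norm.pow_const 2).inv).indicator measurableSet_ball.compl
    have hk1int : Integrable k1 volume := by
      rw [hk1, integrable_indicator_iff measurableSet_ball]
      exact Stmt15Aux.ballInt
    -- near part via convolution
    have hprod := hhint.convolution_integrand (ContinuousLinearMap.mul ℝ ℝ) hk1int
    have hnear : ∀ᵐ x : EuclideanSpace ℝ (Fin 4) ∂volume,
        Integrable (fun y => h y * k1 (x - y)) volume := by
      have := hprod.prod_right_ae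
      filter_upwards [this] with x hx
      simpa using hx
    filter_upwards [hnear] with x hx1
    -- far part, for every x
    have hx2 : Integrable (fun y => h y * k2 (x - y)) volume := by
      refine hhint.norm.mono' (hhint.aestronglyMeasurable.mul
        ((hk2meas.comp (measurable_const.sub measurable_id)).aestronglyMeasurable))
        (ae_of_all _ fun y => ?_)
      rw [norm_mul, Real.norm_eq_abs (k2 (x - y))]
      have hk2le : |k2 (x - y)| ≤ 1 := by
        rw [hk2]
        by_cases hmem : x - y ∈ (Metric.ball (0 : EuclideanSpace ℝ (Fin 4)) 1)ᶜ
        · rw [Set.indicator_of_mem hmem]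
          have h1 : (1:ℝ) ≤ ‖x - y‖ := by
            simpa [Metric.mem_ball, dist_eq_norm] using hmem
          have h2 : (1:ℝ) ≤ ‖x - y‖ ^ 2 := by nlinarith [h1]
          rw [abs_of_nonneg (by positivity)]
          exact inv_le_one_of_one_le₀ h2
        · rw [Set.indicator_of_notMem hmem]; norm_num
      calc ‖h y‖ * |k2 (x - y)| ≤ ‖h y‖ * 1 :=
            mul_le_mul_of_nonneg_left hk2le (norm_nonneg _)
        _ = ‖h y‖ := mul_one _
    have hsum := hx1.add hx2
    refine hsum.congr (ae_of_all _ fun y => ?_)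
    have hdecomp : k1 (x - y) + k2 (x - y) = (‖x - y‖ ^ 2)⁻¹ := by
      rw [hk1, hk2]
      exact congrFun (Set.indicator_self_add_compl
        (Metric.ball (0 : EuclideanSpace ℝ (Fin 4)) 1) (fun z => (‖z‖ ^ 2)⁻¹)) (x - y)
    calc h y * k1 (x - y) + h y * k2 (x - y)
        = h y * (k1 (x - y) + k2 (x - y)) := by ring
      _ = h y * (‖x - y‖ ^ 2)⁻¹ := by rw [hdecomp]
      _ = v y * f y / ‖x - y‖ ^ 2 := by rw [hh, div_eq_mul_inv]
  -- closedness of K₁ under the relevant linear combinations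
  have hcombo : ∀ f g : Lp ℝ 2 (volume : Measure (EuclideanSpace ℝ (Fin 4))),
      f ∈ K₁ → g ∈ K₁ → ∀ c : ℝ, (f - c • g) ∈ K₁ ∧
        (∫ y, v y * (f - c • g) y) = (∫ y, v y * f y) - c * (∫ y, v y * g y) := by
    intro f g hf hg c
    rw [hK₁def, Set.mem_setOf_eq] at hf hg
    have hw : ∀ᵐ y : EuclideanSpace ℝ (Fin 4) ∂volume,
        (f - c • g : Lp ℝ 2 (volume : Measure (EuclideanSpace ℝ (Fin 4)))) y
          = f y - c * g y := by
      filter_upwards [Lp.coeFn_sub f (c • g), Lp.coeFn_smul c g] with y h1 h2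
      rw [h1, Pi.sub_apply, h2, Pi.smul_apply, smul_eq_mul]
    have hGlin : ∀ᵐ x : EuclideanSpace ℝ (Fin 4) ∂volume,
        G0 (fun y => v y * (f - c • g) y) x
          = G0 (fun y => v y * f y) x - c * G0 (fun y => v y * g y) x := by
      filter_upwards [hker f, hker g] with x hxf hxg
      have hIeq : (∫ y, v y * (f - c • g) y / ‖x - y‖ ^ 2)
          = (∫ y, v y * f y / ‖x - y‖ ^ 2) - c * ∫ y, v y * g y / ‖x - y‖ ^ 2 := by
        have step1 : (∫ y, v y * (f - c • g) y / ‖x - y‖ ^ 2)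
            = ∫ y, (v y * f y / ‖x - y‖ ^ 2 - c * (v y * g y / ‖x - y‖ ^ 2)) := by
          refine integral_congr_ae ?_
          filter_upwards [hw] with y hy
          rw [hy]; ring
        rw [step1, integral_sub hxf (hxg.const_mul c), integral_const_mul]
      simp only [G0]
      rw [hIeq]; ring
    constructor
    · rw [hK₁def, Set.mem_setOf_eq]
      filter_upwards [hf, hg, hw, hGlin] with x hfx hgx hwx hGx
      rw [hwx, hGx]
      have : U x * (f x - c * g x) + v x * (G0 (fun y => v y * f y) x
          - c * G0 (fun y => v y * g y) x)
          = (U x * f x + v x * G0 (fun y => v y * f y) x)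
            - c * (U x * g x + v x * G0 (fun y => v y * g y) x) := by ring
      rw [this, hfx, hgx]; ring
    · have step1 : (∫ y, v y * (f - c • g) y)
          = ∫ y, (v y * f y - c * (v y * g y)) := by
        refine integral_congr_ae ?_
        filter_upwards [hw] with y hy
        rw [hy]; ring
      rw [step1, integral_sub (hpair f) ((hpair g).const_mul c), integral_const_mul]
  -- abstract finish
  by_cases hall : ∀ f ∈ K₁, (∫ y, v y * f y) = 0
  · have hsub : K₁ ⊆ K₂ := fun f hf => ⟨hf, hall f hf⟩
    exact le_trans (Submodule.rank_mono (Submodule.span_mono hsub)) (self_le_add_right _ 1)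
  · push_neg at hall
    obtain ⟨g, hgK, hgne⟩ := hall
    have hspan : Submodule.span ℝ K₁ ≤ Submodule.span ℝ K₂ ⊔ Submodule.span ℝ {g} := by
      rw [Submodule.span_le]
      intro f hf
      set c : ℝ := (∫ y, v y * f y) / (∫ y, v y * g y) with hc
      obtain ⟨hwK, hwφ⟩ := hcombo f g hf hgK c
      have hφw : (∫ y, v y * (f - c • g) y) = 0 := by
        rw [hwφ, hc]; field_simp; ring
      have hw2 : (f - c • g) ∈ K₂ := ⟨hwK, hφw⟩
      have hfeq : f = (f - c • g) + c • g := by abel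
      rw [hfeq]
      exact Submodule.add_mem _
        (Submodule.mem_sup_left (Submodule.subset_span hw2))
        (Submodule.mem_sup_right (Submodule.smul_mem _ c (Submodule.subset_span rfl)))
    calc Module.rank ℝ ↥(Submodule.span ℝ K₁)
        ≤ Module.rank ℝ ↥(Submodule.span ℝ K₂ ⊔ Submodule.span ℝ {g}) :=
          Submodule.rank_mono hspan
      _ ≤ Module.rank ℝ ↥(Submodule.span ℝ K₂) + Module.rank ℝ ↥(Submodule.span ℝ ({g} : Set _)) :=
          Submodule.rank_add_le_rank_add_rank _ _
      _ ≤ Module.rank ℝ ↥(Submodule.span ℝ K₂) + 1 := by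
          refine add_le_add le_rfl ?_
          exact le_trans (rank_span_le _) (by simp)

end
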